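/- arXiv:1004.2995 — 2 statements merged into one kernel-verified Lean document; each statement's English description precedes it below -/
import Mathlib

section
/- Let X be a nonnegative random variable with mean μ satisfying P(X − μ ≥ t) ≤ exp(−t²/2) for all t ≥ 0. Then for any ξ > 0, E[(X² − (1+ξ)²μ²)₊] ≤ 2(1 + ξ⁻¹) exp(−ξ²μ²/2), where (·)₊ denotes the positive part. -/
open MeasureTheory

open Real Set

lemma exp_int_aux {c : ℝ} (hc : 0 < c) : ∫ x in Ioi (0:ℝ), Real.exp (-c * x) = c⁻¹ := by
  have := integral_exp_neg_mul_rpow (p := 1) (b := c) one_pos hc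
  simp only [Real.rpow_one] at this
  rw [this]
  norm_num [Real.Gamma_two, Real.rpow_neg_one]

/-- Lemma 16, second claim: for a nonnegative random variable with mean μ and Gaussian
upper tail, E[(X² − (1+ξ)²μ²)₊] ≤ 2(1+ξ⁻¹)exp(−ξ²μ²/2) for every ξ > 0. -/
theorem integral_pos_part_le_of_gaussian_tail {Ω : Type*} [MeasurableSpace Ω]
    (ℙ : Measure Ω) [IsProbabilityMeasure ℙ] (X : Ω → ℝ) (μ : ℝ)
    (hX : ∀ ω, 0 ≤ X ω) (hint : Integrable X ℙ) (hmean : ∫ ω, X ω ∂ℙ = μ)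
    (htail : ∀ t : ℝ, 0 ≤ t → (ℙ {ω | X ω - μ ≥ t}).toReal ≤ Real.exp (-t ^ 2 / 2))
    (ξ : ℝ) (hξ : 0 < ξ) :
    ∫ ω, max ((X ω) ^ 2 - (1 + ξ) ^ 2 * μ ^ 2) 0 ∂ℙ
      ≤ 2 * (1 + ξ⁻¹) * Real.exp (-ξ ^ 2 * μ ^ 2 / 2) := by
  have hμ : 0 ≤ μ := hmean ▸ integral_nonneg hX
  set a : ℝ := (1 + ξ) * μ with ha
  have h1ξ : (0:ℝ) < 1 + ξ := by linarith
  have haμ : μ ≤ a := by nlinarith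
  have ha0 : 0 ≤ a := le_trans hμ haμ
  set c : ℝ := ξ / (2 * (1 + ξ)) with hc
  have hc0 : 0 < c := by positivity
  set K : ℝ := Real.exp (-ξ ^ 2 * μ ^ 2 / 2) with hK
  set g : Ω → ℝ := fun ω => max ((X ω) ^ 2 - (1 + ξ) ^ 2 * μ ^ 2) 0 with hg
  have hg0 : ∀ ω, 0 ≤ g ω := fun ω => le_max_right _ _
  have hgm : AEMeasurable g ℙ := by
    have := hint.aemeasurable
    fun_prop
  -- layer cake
  have hlayer : ∫⁻ ω, ENNReal.ofReal (g ω) ∂ℙ = ∫⁻ t in Ioi 0, ℙ {ω | t < g ω} := by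
    exact lintegral_eq_lintegral_meas_lt ℙ (Filter.Eventually.of_forall hg0) hgm
  -- tail bound for t > 0
  have htailg : ∀ t : ℝ, 0 < t → ℙ {ω | t < g ω} ≤ ENNReal.ofReal (K * Real.exp (-c * t)) := by
    intro t ht
    set r : ℝ := Real.sqrt (a ^ 2 + t) with hr
    set s : ℝ := r - μ with hs
    have hsq : r ^ 2 = a ^ 2 + t := Real.sq_sqrt (by positivity)
    have hra : a ≤ r := by nlinarith [Real.sqrt_nonneg (a ^ 2 + t)]
    have hs0 : 0 ≤ s := by simp only [hs]; linarith
    have hsub : {ω | t < g ω} ⊆ {ω | X ω - μ ≥ s} := by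
      intro ω hω
      simp only [mem_setOf_eq, hg, lt_max_iff] at hω
      have h2 : t < X ω ^ 2 - (1 + ξ) ^ 2 * μ ^ 2 := by
        rcases hω with h | h
        · exact h
        · exact absurd h (lt_asymm ht)
      have hx2 : a ^ 2 + t < X ω ^ 2 := by nlinarith
      have hxs : r ≤ X ω := by
        nlinarith [Real.sqrt_nonneg (a ^ 2 + t), hX ω]
      simp only [mem_setOf_eq, ge_iff_le, hs]
      linarith
    have hb := htail s hs0
    -- key pointwise exponent inequality
    have hkey : ξ ^ 2 * μ ^ 2 + t * ξ / (1 + ξ) ≤ s ^ 2 := by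
      have h2 : t * ξ / (1 + ξ) ≤ s ^ 2 - ξ ^ 2 * μ ^ 2 := by
        rw [div_le_iff₀ h1ξ, hs]
        have ht' : t = r ^ 2 - ((1 + ξ) * μ) ^ 2 := by rw [hsq, ha]; ring
        rw [ht']
        nlinarith [sq_nonneg (r - (1 + ξ) * μ)]
      linarith
    have hexp : Real.exp (-s ^ 2 / 2) ≤ K * Real.exp (-c * t) := by
      rw [hK, ← Real.exp_add]
      apply Real.exp_le_exp.mpr
      rw [hc]
      have : -c * t = -(t * ξ / (1 + ξ)) / 2 := by
        rw [hc]; field_simp <;> ring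
      nlinarith [hkey]
    calc ℙ {ω | t < g ω} ≤ ℙ {ω | X ω - μ ≥ s} := measure_mono hsub
      _ = ENNReal.ofReal (ℙ {ω | X ω - μ ≥ s}).toReal := (ENNReal.ofReal_toReal (measure_ne_top _ _)).symm
      _ ≤ ENNReal.ofReal (K * Real.exp (-c * t)) := ENNReal.ofReal_le_ofReal (le_trans hb hexp)
  -- integrability of the exponential bound
  have hintexp : IntegrableOn (fun t : ℝ => K * Real.exp (-c * t)) (Ioi 0) := by
    apply Integrable.const_mul
    simpa using (exp_neg_integrableOn_Ioi 0 hc0).integrable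
  have hbd : ∫⁻ t in Ioi 0, ℙ {ω | t < g ω} ≤ ENNReal.ofReal (K * c⁻¹) := by
    calc ∫⁻ t in Ioi 0, ℙ {ω | t < g ω}
        ≤ ∫⁻ t in Ioi 0, ENNReal.ofReal (K * Real.exp (-c * t)) := by
          apply setLIntegral_mono (Measurable.ennreal_ofReal (by fun_prop))
          intro t ht
          exact htailg t ht
      _ = ENNReal.ofReal (∫ t in Ioi 0, K * Real.exp (-c * t)) := by
          rw [← ofReal_integral_eq_lintegral_ofReal hintexp]
          exact Filter.Eventually.of_forall fun t => by positivity
      _ = ENNReal.ofReal (K * c⁻¹) := by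
          rw [integral_const_mul, exp_int_aux hc0]
  have hKc : K * c⁻¹ = 2 * (1 + ξ⁻¹) * Real.exp (-ξ ^ 2 * μ ^ 2 / 2) := by
    rw [hc, hK]
    field_simp
    ring
  have hfin : ∫⁻ ω, ENNReal.ofReal (g ω) ∂ℙ ≤ ENNReal.ofReal (K * c⁻¹) := hlayer ▸ hbd
  have hgint : Integrable g ℙ := by
    refine ⟨hgm.aestronglyMeasurable, ?_⟩
    rw [hasFiniteIntegral_iff_ofReal (Filter.Eventually.of_forall hg0)]
    exact lt_of_le_of_lt hfin ENNReal.ofReal_lt_top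
  rw [show ∫ ω, max ((X ω) ^ 2 - (1 + ξ) ^ 2 * μ ^ 2) 0 ∂ℙ = ∫ ω, g ω ∂ℙ from rfl,
    integral_eq_lintegral_of_nonneg_ae (Filter.Eventually.of_forall hg0) hgm.aestronglyMeasurable]
  rw [← hKc]
  exact ENNReal.toReal_le_of_le_ofReal (by positivity) hfin
end

section
/- Suppose Y = XA + E and let P be the projection onto the column space of X, so PY = XA + PE. Let k̂ = max{k : d_k(PY) ≥ √μ}. If there exists s with d_s(XA) > (1+δ)√μ and d_{s+1}(XA) < (1−δ)√μ for some δ ∈ (0,1], then the event {k̂ ≠ s} is contained in the event {d₁(PE) ≥ δ√μ}. -/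
open Matrix MeasureTheory

/-- List of singular values of a real matrix, sorted in decreasing order
(square roots of the eigenvalues of `Aᵀ * A`). -/
noncomputable def svList {m n : ℕ} (A : Matrix (Fin m) (Fin n) ℝ) : List ℝ :=
  (((List.ofFn (show (Aᵀ * A).IsHermitian by
      simpa [Matrix.conjTranspose_eq_transpose_of_trivial] using
        Matrix.isHermitian_conjTranspose_mul_self A).eigenvalues).map Real.sqrt).mergeSort
    (fun a b => decide (b ≤ a)))

/-- `sv A k` is the `k`-th largest singular value of `A` (1-indexed); `0` if `k` exceeds
the number of singular values. -/
noncomputable def sv {m n : ℕ} (A : Matrix (Fin m) (Fin n) ℝ) (k : ℕ) : ℝ :=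
  (svList A).getD (k - 1) 0

/-- Nuclear norm: sum of the singular values. -/
noncomputable def nuclearNorm {m n : ℕ} (A : Matrix (Fin m) (Fin n) ℝ) : ℝ :=
  (svList A).sum

/-- Squared Frobenius norm. -/
noncomputable def frobSq {m n : ℕ} (A : Matrix (Fin m) (Fin n) ℝ) : ℝ :=
  ∑ i, ∑ j, (A i j) ^ 2

/-- Frobenius inner product. -/
noncomputable def frobInner {m n : ℕ} (C D : Matrix (Fin m) (Fin n) ℝ) : ℝ :=
  ∑ i, ∑ j, C i j * D i j

/-! ### Auxiliary lemmas on sorted lists -/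

theorem Matrix.isHermitian_transpose_mul_self {m n : ℕ} (A : Matrix (Fin m) (Fin n) ℝ) :
    (Aᵀ * A).IsHermitian := by
  simpa [Matrix.conjTranspose_eq_transpose_of_trivial] using
    Matrix.isHermitian_conjTranspose_mul_self A

section SortedList
variable {n : ℕ} (g : Fin n → ℝ)

noncomputable def sList : List ℝ := (List.ofFn g).mergeSort (fun a b => decide (b ≤ a))

lemma sList_length : (sList g).length = n := by simp [sList]

lemma sList_perm : List.Perm (sList g) (List.ofFn g) := List.mergeSort_perm _ _

lemma sList_pairwise : (sList g).Pairwise (fun a b => b ≤ a) := by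
  have := List.pairwise_mergeSort (le := fun a b : ℝ => decide (b ≤ a))
    (by intro a b c h1 h2; simp_all; linarith)
    (by intro a b; simpa using le_total b a) (List.ofFn g)
  simpa [sList] using this

lemma sList_anti {i j : ℕ} (hij : i ≤ j) (hj : j < n) :
    (sList g).getD j 0 ≤ (sList g).getD i 0 := by
  have hl := sList_length g
  have hj' : j < (sList g).length := by rw [hl]; exact hj
  have hi' : i < (sList g).length := lt_of_le_of_lt hij hj'
  rw [List.getD_eq_getElem _ _ hj', List.getD_eq_getElem _ _ hi']
  rcases eq_or_lt_of_le hij with rfl | h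
  · exact le_refl _
  · exact List.pairwise_iff_get.1 (sList_pairwise g) ⟨i, hi'⟩ ⟨j, hj'⟩ h

lemma sList_nonneg (hg : ∀ i, 0 ≤ g i) (j : ℕ) : 0 ≤ (sList g).getD j 0 := by
  rcases lt_or_ge j (sList g).length with h | h
  · rw [List.getD_eq_getElem _ _ h]
    have : (sList g)[j] ∈ sList g := List.getElem_mem h
    have := (sList_perm g).mem_iff.1 this
    simp only [List.mem_ofFn] at this
    obtain ⟨i, hi⟩ := this
    exact hi ▸ hg i
  · rw [List.getD_eq_default _ _ h]

lemma sList_le_head (hn : 0 < n) (i : Fin n) : g i ≤ (sList g).getD 0 0 := by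
  have hmem : g i ∈ sList g := (sList_perm g).mem_iff.2 (by simp [List.mem_ofFn])
  obtain ⟨j, hj, hval⟩ := List.getElem_of_mem hmem
  have h0 : 0 < (sList g).length := by rw [sList_length]; exact hn
  rw [List.getD_eq_getElem _ _ h0]
  rw [← hval]
  have := sList_anti g (Nat.zero_le j) (by rwa [sList_length g] at hj)
  rwa [List.getD_eq_getElem _ _ hj, List.getD_eq_getElem _ _ h0] at this

lemma countP_ofFn (p : ℝ → Prop) [DecidablePred p] :
    ((List.ofFn g).countP (fun x => decide (p x))) =
      (Finset.univ.filter (fun i => p (g i))).card := by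
  have h1 : (Finset.univ.filter (fun i => p (g i))).val
      = (Finset.univ.val.filter (fun i => p (g i))) := Finset.filter_val _ _
  have h2 : (Finset.univ : Finset (Fin n)).val = ↑(List.finRange n) := by
    rw [Fin.univ_def]
  rw [Finset.card_def, h1, h2]
  rw [List.ofFn_eq_map, List.countP_map]
  simp [List.countP_eq_length_filter]
  rfl

lemma sList_card_ge (k : ℕ) (hk : k < n) :
    k + 1 ≤ (Finset.univ.filter (fun i => (sList g).getD k 0 ≤ g i)).card := by
  set t := (sList g).getD k 0 with ht
  rw [← countP_ofFn g (fun x => t ≤ x)]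
  rw [← (sList_perm g).countP_eq]
  have hlen : (sList g).length = n := sList_length g
  calc k + 1 = ((sList g).take (k+1)).countP (fun x => decide (t ≤ x)) := by
        rw [List.countP_eq_length.2]
        · rw [List.length_take, hlen]; omega
        · intro a ha
          obtain ⟨i, hi, hval⟩ := List.mem_iff_getElem.1 ha
          simp only [List.length_take, hlen] at hi
          have hik : i ≤ k := by omega
          have := sList_anti g hik hk
          rw [List.getElem_take] at hval
          rw [List.getD_eq_getElem _ _ (by omega : i < (sList g).length)] at this
          simp only [decide_eq_true_eq]
          rw [← hval]; exact this
    _ ≤ (sList g).countP (fun x => decide (t ≤ x)) := by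
        conv_rhs => rw [← List.take_append_drop (k+1) (sList g)]
        rw [List.countP_append]; omega

lemma sList_card_le (k : ℕ) (hk : k < n) :
    n - k ≤ (Finset.univ.filter (fun i => g i ≤ (sList g).getD k 0)).card := by
  set t := (sList g).getD k 0 with ht
  rw [← countP_ofFn g (fun x => x ≤ t)]
  rw [← (sList_perm g).countP_eq]
  have hlen : (sList g).length = n := sList_length g
  calc n - k ≤ ((sList g).drop k).countP (fun x => decide (x ≤ t)) := by
        rw [List.countP_eq_length.2]
        · rw [List.length_drop, hlen]
        · intro a ha
          obtain ⟨i, hi, hval⟩ := List.mem_iff_getElem.1 ha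
          simp only [List.length_drop, hlen] at hi
          have := sList_anti g (Nat.le_add_right k i) (by omega : k + i < n)
          rw [List.getElem_drop] at hval
          rw [List.getD_eq_getElem _ _ (by omega : k + i < (sList g).length)] at this
          simp only [decide_eq_true_eq]
          rw [← hval]; exact this
    _ ≤ (sList g).countP (fun x => decide (x ≤ t)) := by
        conv_rhs => rw [← List.take_append_drop k (sList g)]
        rw [List.countP_append]; omega

end SortedList

/-! ### Spectral lemmas -/

section Spectral
variable {m n : ℕ}

lemma norm_toEuclideanLin_sq (M : Matrix (Fin m) (Fin n) ℝ) (x : EuclideanSpace ℝ (Fin n)) :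
    ‖Matrix.toEuclideanLin M x‖ ^ 2 =
      inner ℝ x (Matrix.toEuclideanLin (Mᵀ * M) x) := by
  rw [← real_inner_self_eq_norm_sq]
  simp only [Matrix.toEuclideanLin_apply]
  simp only [PiLp.inner_apply, RCLike.inner_apply, conj_trivial]
  change ∑ i, (M *ᵥ x) i * (M *ᵥ x) i = ∑ i, ((Mᵀ * M) *ᵥ x) i * x i
  rw [show ∑ i, ((Mᵀ * M) *ᵥ x) i * x i = ∑ i, x i * ((Mᵀ * M) *ᵥ x) i from
    Finset.sum_congr rfl fun i _ => mul_comm _ _]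
  have : ∑ i, x i * ((Mᵀ * M) *ᵥ x) i = x ⬝ᵥ ((Mᵀ * M) *ᵥ x) := rfl
  rw [this, ← Matrix.mulVec_mulVec, Matrix.dotProduct_mulVec, Matrix.vecMul_transpose]
  rfl

lemma inner_toEuclideanLin_eq_sum {S : Matrix (Fin n) (Fin n) ℝ} (hS : S.IsHermitian)
    (x : EuclideanSpace ℝ (Fin n)) :
    (inner ℝ x (Matrix.toEuclideanLin S x) : ℝ) =
      ∑ i, hS.eigenvalues i * (hS.eigenvectorBasis.repr x i) ^ 2 := by
  set b := hS.eigenvectorBasis with hbdef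
  have hsym : (Matrix.toEuclideanLin S).IsSymmetric :=
    (Matrix.isHermitian_iff_isSymmetric).1 hS
  have hb : ∀ i, Matrix.toEuclideanLin S (b i) = hS.eigenvalues i • (b i) := by
    intro i
    apply (WithLp.equiv 2 (Fin n → ℝ)).injective
    simp only [Matrix.toEuclideanLin_apply]
    have := hS.mulVec_eigenvectorBasis i
    simpa using this
  rw [← b.sum_inner_mul_inner x (Matrix.toEuclideanLin S x)]
  congr 1
  funext i
  have h1 : (inner ℝ (b i) (Matrix.toEuclideanLin S x) : ℝ)
      = hS.eigenvalues i * inner ℝ (b i) x := by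
    rw [← hsym (b i) x, hb i, inner_smul_left]
    simp
  rw [h1]
  have h2 : (inner ℝ x (b i) : ℝ) = b.repr x i := by
    rw [b.repr_apply_apply, real_inner_comm]
  have h3 : (inner ℝ (b i) x : ℝ) = b.repr x i := (b.repr_apply_apply x i).symm
  rw [h2, h3]; ring

lemma sum_repr_sq (b : OrthonormalBasis (Fin n) ℝ (EuclideanSpace ℝ (Fin n)))
    (x : EuclideanSpace ℝ (Fin n)) : ∑ i, (b.repr x i) ^ 2 = ‖x‖ ^ 2 := by
  rw [← b.repr.norm_map x]
  rw [EuclideanSpace.norm_eq]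
  rw [Real.sq_sqrt (by positivity)]
  simp [sq_abs]

lemma repr_zero_of_mem_span (b : OrthonormalBasis (Fin n) ℝ (EuclideanSpace ℝ (Fin n)))
    (s : Finset (Fin n)) (x : EuclideanSpace ℝ (Fin n))
    (hx : x ∈ Submodule.span ℝ (b '' ↑s)) : ∀ j ∉ s, b.repr x j = 0 := by
  induction hx using Submodule.span_induction with
  | mem y hy =>
    obtain ⟨i, hi, rfl⟩ := hy
    intro j hj
    rw [b.repr_self]
    have : j ≠ i := fun h => hj (h ▸ hi)
    simp [EuclideanSpace.single_apply]
    exact this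
  | zero => simp
  | add y z _ _ hy hz => intro j hj; rw [map_add]; simp [hy j hj, hz j hj]
  | smul c y _ hy => intro j hj; rw [_root_.map_smul]; simp [hy j hj]

lemma finrank_span_basis_image (b : OrthonormalBasis (Fin n) ℝ (EuclideanSpace ℝ (Fin n)))
    (s : Finset (Fin n)) :
    Module.finrank ℝ (Submodule.span ℝ (b '' ↑s)) = s.card := by
  have hind : LinearIndependent ℝ (fun i : ↥(s : Set (Fin n)) => b i) :=
    (b.orthonormal.comp _ Subtype.val_injective).linearIndependent
  have him : Set.range (fun i : ↥(s : Set (Fin n)) => b (i : Fin n)) = b '' ↑s := by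
    rw [← Set.image_eq_range]
  rw [← him, finrank_span_eq_card hind]
  simp

lemma exists_unit_mem_inf (V W : Submodule ℝ (EuclideanSpace ℝ (Fin n)))
    (h : n < Module.finrank ℝ V + Module.finrank ℝ W) :
    ∃ x : EuclideanSpace ℝ (Fin n), ‖x‖ = 1 ∧ x ∈ V ∧ x ∈ W := by
  have hfin : Module.finrank ℝ (EuclideanSpace ℝ (Fin n)) = n := by
    simp [finrank_euclideanSpace]
  have hsup : Module.finrank ℝ ↥(V ⊔ W) ≤ n := by
    have := Submodule.finrank_le (V ⊔ W)
    omega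
  have heq := Submodule.finrank_sup_add_finrank_inf_eq V W
  have hpos : 0 < Module.finrank ℝ ↥(V ⊓ W) := by omega
  have hne : V ⊓ W ≠ ⊥ := by
    intro hbot
    rw [hbot] at hpos
    simp at hpos
  obtain ⟨x, hxVW, hx0⟩ := Submodule.exists_mem_ne_zero_of_ne_bot hne
  refine ⟨‖x‖⁻¹ • x, ?_, ?_, ?_⟩
  · rw [norm_smul]
    simp [norm_ne_zero_iff.2 hx0]
  · exact Submodule.smul_mem _ _ hxVW.1
  · exact Submodule.smul_mem _ _ hxVW.2

/-- Square roots of eigenvalues of `MᵀM`, the (unsorted) singular values. -/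
noncomputable def gsv (M : Matrix (Fin m) (Fin n) ℝ) : Fin n → ℝ :=
  fun i => Real.sqrt ((Matrix.isHermitian_transpose_mul_self M).eigenvalues i)

lemma gsv_nonneg (M : Matrix (Fin m) (Fin n) ℝ) (i : Fin n) : 0 ≤ gsv M i :=
  Real.sqrt_nonneg _

lemma svList_eq_sList (M : Matrix (Fin m) (Fin n) ℝ) : svList M = sList (gsv M) := by
  rw [svList, sList, List.map_ofFn]
  rfl

lemma sv_eq (M : Matrix (Fin m) (Fin n) ℝ) (k : ℕ) :
    sv M k = (sList (gsv M)).getD (k - 1) 0 := by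
  rw [sv, svList_eq_sList]

lemma sv_nonneg (M : Matrix (Fin m) (Fin n) ℝ) (k : ℕ) : 0 ≤ sv M k := by
  rw [sv_eq]; exact sList_nonneg _ (gsv_nonneg M) _

lemma sv_anti (M : Matrix (Fin m) (Fin n) ℝ) {a b : ℕ} (ha : 1 ≤ a) (hab : a ≤ b) :
    sv M b ≤ sv M a := by
  rcases lt_or_ge (b - 1) n with h | h
  · rw [sv_eq, sv_eq]
    exact sList_anti _ (by omega) h
  · rw [sv_eq M b, List.getD_eq_default _ _ (by rw [sList_length]; omega)]
    exact sv_nonneg M a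

lemma sv_eigenvalue_le (M : Matrix (Fin m) (Fin n) ℝ) (i : Fin n) :
    gsv M i ≤ sv M 1 := by
  rw [sv_eq]
  exact sList_le_head _ i.pos i

/-- Key norm bound from above. -/
lemma norm_apply_le (M : Matrix (Fin m) (Fin n) ℝ) (t : ℝ) (ht : 0 ≤ t)
    (x : EuclideanSpace ℝ (Fin n)) (hx1 : ‖x‖ = 1)
    (h : ∀ i, (Matrix.isHermitian_transpose_mul_self M).eigenvectorBasis.repr x i = 0 ∨
      gsv M i ≤ t) :
    ‖Matrix.toEuclideanLin M x‖ ≤ t := by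
  set hM := Matrix.isHermitian_transpose_mul_self M
  have htr : Mᵀ * M = Mᴴ * M := by rw [Matrix.conjTranspose_eq_transpose_of_trivial]
  have hsq : ‖Matrix.toEuclideanLin M x‖ ^ 2 ≤ t ^ 2 := by
    rw [norm_toEuclideanLin_sq, inner_toEuclideanLin_eq_sum hM x]
    calc ∑ i, hM.eigenvalues i * (hM.eigenvectorBasis.repr x i) ^ 2
        ≤ ∑ i, t ^ 2 * (hM.eigenvectorBasis.repr x i) ^ 2 := by
          apply Finset.sum_le_sum
          intro i _
          rcases h i with h0 | hle
          · rw [h0]; simp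
          · apply mul_le_mul_of_nonneg_right _ (sq_nonneg _)
            have := Matrix.eigenvalues_conjTranspose_mul_self_nonneg M i
            calc hM.eigenvalues i = (gsv M i) ^ 2 := by
                  rw [gsv]; exact (Real.sq_sqrt this).symm
              _ ≤ t ^ 2 := by
                  apply pow_le_pow_left₀ (gsv_nonneg M i) hle
      _ = t ^ 2 := by
          rw [← Finset.mul_sum, sum_repr_sq, hx1]; ring
  have hn : 0 ≤ ‖Matrix.toEuclideanLin M x‖ := norm_nonneg _
  nlinarith

/-- Key norm bound from below. -/
lemma le_norm_apply (M : Matrix (Fin m) (Fin n) ℝ) (t : ℝ) (ht : 0 ≤ t)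
    (x : EuclideanSpace ℝ (Fin n)) (hx1 : ‖x‖ = 1)
    (h : ∀ i, (Matrix.isHermitian_transpose_mul_self M).eigenvectorBasis.repr x i = 0 ∨
      t ≤ gsv M i) :
    t ≤ ‖Matrix.toEuclideanLin M x‖ := by
  set hM := Matrix.isHermitian_transpose_mul_self M
  have htr : Mᵀ * M = Mᴴ * M := by rw [Matrix.conjTranspose_eq_transpose_of_trivial]
  have hsq : t ^ 2 ≤ ‖Matrix.toEuclideanLin M x‖ ^ 2 := by
    rw [norm_toEuclideanLin_sq, inner_toEuclideanLin_eq_sum hM x]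
    calc t ^ 2 = ∑ i, t ^ 2 * (hM.eigenvectorBasis.repr x i) ^ 2 := by
          rw [← Finset.mul_sum, sum_repr_sq, hx1]; ring
      _ ≤ ∑ i, hM.eigenvalues i * (hM.eigenvectorBasis.repr x i) ^ 2 := by
          apply Finset.sum_le_sum
          intro i _
          rcases h i with h0 | hle
          · rw [h0]; simp
          · apply mul_le_mul_of_nonneg_right _ (sq_nonneg _)
            have hnn := Matrix.eigenvalues_conjTranspose_mul_self_nonneg M i
            calc t ^ 2 ≤ (gsv M i) ^ 2 := pow_le_pow_left₀ ht hle 2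
              _ = hM.eigenvalues i := by rw [gsv]; exact Real.sq_sqrt hnn
  have hn : 0 ≤ ‖Matrix.toEuclideanLin M x‖ := norm_nonneg _
  nlinarith

/-- Weyl's inequality for singular values (with `j = 1`). -/
theorem sv_add_le (M E : Matrix (Fin m) (Fin n) ℝ) (k : ℕ) (hk : 1 ≤ k) :
    sv (M + E) k ≤ sv M k + sv E 1 := by
  rcases le_or_gt k n with hkn | hkn
  swap
  · rw [sv_eq, List.getD_eq_default _ _ (by rw [sList_length]; omega)]
    have := sv_nonneg M k
    have := sv_nonneg E 1
    linarith
  have hn1 : 0 < n := by omega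
  set N := M + E with hN
  set t₁ := sv N k with ht₁
  set t₂ := sv M k with ht₂
  set t₃ := sv E 1 with ht₃
  have ht₁n : 0 ≤ t₁ := sv_nonneg N k
  have ht₂n : 0 ≤ t₂ := sv_nonneg M k
  have ht₃n : 0 ≤ t₃ := sv_nonneg E 1
  set bN := (Matrix.isHermitian_transpose_mul_self N).eigenvectorBasis with hbN
  set bM := (Matrix.isHermitian_transpose_mul_self M).eigenvectorBasis with hbM
  set S₁ := Finset.univ.filter (fun i => t₁ ≤ gsv N i) with hS₁
  set S₂ := Finset.univ.filter (fun i => gsv M i ≤ t₂) with hS₂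
  have hc₁ : k ≤ S₁.card := by
    have := sList_card_ge (gsv N) (k - 1) (by omega)
    rw [hS₁, ht₁, sv_eq]
    omega
  have hc₂ : n - k + 1 ≤ S₂.card := by
    have := sList_card_le (gsv M) (k - 1) (by omega)
    rw [hS₂, ht₂, sv_eq]
    omega
  obtain ⟨x, hx1, hxV, hxW⟩ := exists_unit_mem_inf
    (Submodule.span ℝ (bN '' ↑S₁)) (Submodule.span ℝ (bM '' ↑S₂))
    (by rw [finrank_span_basis_image, finrank_span_basis_image]; omega)
  have hlow : t₁ ≤ ‖Matrix.toEuclideanLin N x‖ := by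
    apply le_norm_apply N t₁ ht₁n x hx1
    intro i
    by_cases hi : i ∈ S₁
    · right
      exact (Finset.mem_filter.1 hi).2
    · left
      exact repr_zero_of_mem_span bN S₁ x hxV i hi
  have hupM : ‖Matrix.toEuclideanLin M x‖ ≤ t₂ := by
    apply norm_apply_le M t₂ ht₂n x hx1
    intro i
    by_cases hi : i ∈ S₂
    · right
      exact (Finset.mem_filter.1 hi).2
    · left
      exact repr_zero_of_mem_span bM S₂ x hxW i hi
  have hupE : ‖Matrix.toEuclideanLin E x‖ ≤ t₃ := by
    apply norm_apply_le E t₃ ht₃n x hx1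
    intro i
    right
    exact sv_eigenvalue_le E i
  have hadd : Matrix.toEuclideanLin N x
      = Matrix.toEuclideanLin M x + Matrix.toEuclideanLin E x := by
    rw [hN, map_add]
    rfl
  calc t₁ ≤ ‖Matrix.toEuclideanLin N x‖ := hlow
    _ ≤ ‖Matrix.toEuclideanLin M x‖ + ‖Matrix.toEuclideanLin E x‖ := by
        rw [hadd]; exact norm_add_le _ _
    _ ≤ t₂ + t₃ := add_le_add hupM hupE

lemma eigenvalues_congr {k : ℕ} {A B : Matrix (Fin k) (Fin k) ℝ}
    (hA : A.IsHermitian) (hB : B.IsHermitian) (h : A = B) :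
    hA.eigenvalues = hB.eigenvalues := by subst h; rfl

lemma sv_neg (E : Matrix (Fin m) (Fin n) ℝ) (k : ℕ) : sv (-E) k = sv E k := by
  have hm : (-E)ᵀ * (-E) = Eᵀ * E := by simp
  rw [sv, sv, svList, svList,
    eigenvalues_congr (Matrix.isHermitian_transpose_mul_self (-E))
      (hm ▸ Matrix.isHermitian_transpose_mul_self E) hm]

end Spectral

/-- Theorem 2 (deterministic form). -/
theorem rank_consistency_event {m n : ℕ}
    (XA PE : Matrix (Fin m) (Fin n) ℝ)
    (μ δ : ℝ) (hμ : 0 < μ) (hδ0 : 0 < δ) (hδ1 : δ ≤ 1)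
    (s : ℕ) (hs1 : 1 ≤ s)
    (hlow : (1 + δ) * Real.sqrt μ < sv XA s)
    (hhigh : sv XA (s + 1) < (1 - δ) * Real.sqrt μ)
    (hne : sSup {k : ℕ | 1 ≤ k ∧ Real.sqrt μ ≤ sv (XA + PE) k} ≠ s) :
    δ * Real.sqrt μ ≤ sv PE 1 := by
  by_contra hcon
  push_neg at hcon
  set c := Real.sqrt μ with hc
  have hc0 : 0 < c := Real.sqrt_pos.2 hμ
  -- Weyl both ways
  have hW1 : sv XA s ≤ sv (XA + PE) s + sv PE 1 := by
    have := sv_add_le (XA + PE) (-PE) s hs1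
    rw [add_neg_cancel_right, sv_neg] at this
    exact this
  have hW2 : sv (XA + PE) (s + 1) ≤ sv XA (s + 1) + sv PE 1 :=
    sv_add_le XA PE (s + 1) (by omega)
  have hsin : Real.sqrt μ ≤ sv (XA + PE) s := by
    have : (1 + δ) * c < sv (XA + PE) s + δ * c := by
      calc (1 + δ) * c < sv XA s := hlow
        _ ≤ sv (XA + PE) s + sv PE 1 := hW1
        _ < sv (XA + PE) s + δ * c := by linarith
    rw [← hc]; nlinarith
  have hsup : ∀ k, s + 1 ≤ k → sv (XA + PE) k < c := by
    intro k hk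
    calc sv (XA + PE) k ≤ sv (XA + PE) (s + 1) := sv_anti _ (by omega) hk
      _ ≤ sv XA (s + 1) + sv PE 1 := hW2
      _ < (1 - δ) * c + δ * c := by linarith
      _ = c := by ring
  set T := {k : ℕ | 1 ≤ k ∧ Real.sqrt μ ≤ sv (XA + PE) k} with hT
  have hsT : s ∈ T := ⟨hs1, hsin⟩
  have hbound : ∀ k ∈ T, k ≤ s := by
    intro k hk
    by_contra hks
    push_neg at hks
    exact absurd hk.2 (not_le.2 (hsup k (by omega)))
  have : sSup T = s := by
    apply le_antisymm
    · exact csSup_le ⟨s, hsT⟩ hbound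
    · exact le_csSup ⟨s, hbound⟩ hsT
  exact hne this
end
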